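/- Let p be an odd prime and f₁, f₂ odd positive integers. The function C_{p,f}(n₁,n₂) is multiplicative in the two variables n₁, n₂: if n₁ = n₁'·n₁'' and n₂ = n₂'·n₂'' with gcd(n₁'n₂', n₁''n₂'') = 1, then C_{p,f}(n₁,n₂) = C_{p,f}(n₁',n₂')·C_{p,f}(n₁'',n₂''), and C_{p,f}(1,1) = 1. -/

import Mathlib

open scoped Classical

noncomputable section

/-- `D(m,n) := (m+1-n)^2 - 4m`. -/
def Dfun (m n : ℤ) : ℤ := (m + 1 - n) ^ 2 - 4 * m

/-- `C_p^{(ℓ)}(a,f,n)`: the number of units `m` modulo `ℓ^e`, where `e = ν_ℓ(4nf²)`,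
satisfying `D(p,m) ≡ a f² (mod ℓ^e)`. -/
def Cpl (p : ℕ) (a : ℤ) (f n ℓ : ℕ) : ℕ :=
  ((Finset.range (ℓ ^ ((4 * n * f ^ 2).factorization ℓ))).filter
    (fun m => Nat.Coprime m (ℓ ^ ((4 * n * f ^ 2).factorization ℓ)) ∧
      ((ℓ : ℤ) ^ ((4 * n * f ^ 2).factorization ℓ)) ∣
        (Dfun (p : ℤ) (m : ℤ) - a * (f : ℤ) ^ 2))).card

/-- The Kronecker symbol at the prime `2`: `0` for even `a`, `1` for `a ≡ ±1 (mod 8)`,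
`-1` for `a ≡ ±3 (mod 8)`. -/
def kron2 (a : ℤ) : ℤ := if 2 ∣ a then 0 else if a % 8 = 1 ∨ a % 8 = 7 then 1 else -1

/-- The Kronecker symbol `(a/n)`: completely multiplicative in `n`, equal to the Legendre
symbol at odd primes and to `kron2` at `2`, with `(a/1) = 1`. -/
def kron (a : ℤ) (n : ℕ) : ℤ :=
  (kron2 a) ^ (n.factorization 2) * jacobiSym a (n / 2 ^ (n.factorization 2))

/-- `S^{(2)}(a,n)`: `1` if `n` is odd, `2` if `n` is even and `a ≡ 5 (mod 8)`,
`0` otherwise. -/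
def S2fun (a n : ℕ) : ℤ := if ¬ (2 ∣ n) then 1 else if a % 8 = 5 then 2 else 0

/-- The triple `(a,f,n)` at the prime `ℓ`: `(a₁,f₁,n₁)` if `ν_ℓ(4n₁f₁²) ≥ ν_ℓ(4n₂f₂²)`
and `(a₂,f₂,n₂)` otherwise. -/
def sel (f₁ f₂ n₁ n₂ a₁ a₂ ℓ : ℕ) : ℕ × ℕ × ℕ :=
  if (4 * n₂ * f₂ ^ 2).factorization ℓ ≤ (4 * n₁ * f₁ ^ 2).factorization ℓ then (a₁, f₁, n₁)
  else (a₂, f₂, n₂)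

/-- `C_{p,f}(n₁,n₂)`: the sum over `a₁ ∈ (ℤ/4n₁ℤ)ˣ`, `a₂ ∈ (ℤ/4n₂ℤ)ˣ` with
`a₁ ≡ a₂ ≡ 1 (mod 4)` and `a₁f₁² ≡ a₂f₂² (mod gcd(4n₁f₁²,4n₂f₂²))` of
`(a₁/n₁)(a₂/n₂) S^{(2)}(a,n) ∏_{ℓ ∣ n₁n₂ odd} C_p^{(ℓ)}(a,f,n)`. -/
def Cpf (p f₁ f₂ n₁ n₂ : ℕ) : ℤ :=
  ∑ a₁ ∈ Finset.range (4 * n₁), ∑ a₂ ∈ Finset.range (4 * n₂),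
    if Nat.Coprime a₁ (4 * n₁) ∧ Nat.Coprime a₂ (4 * n₂) ∧ a₁ % 4 = 1 ∧ a₂ % 4 = 1 ∧
        (a₁ * f₁ ^ 2) % (Nat.gcd (4 * n₁ * f₁ ^ 2) (4 * n₂ * f₂ ^ 2)) =
          (a₂ * f₂ ^ 2) % (Nat.gcd (4 * n₁ * f₁ ^ 2) (4 * n₂ * f₂ ^ 2)) then
      kron (a₁ : ℤ) n₁ * kron (a₂ : ℤ) n₂ *
      S2fun (sel f₁ f₂ n₁ n₂ a₁ a₂ 2).1 (sel f₁ f₂ n₁ n₂ a₁ a₂ 2).2.2 *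
      ∏ ℓ ∈ ((n₁ * n₂).primeFactors.erase 2),
        ((Cpl p ((sel f₁ f₂ n₁ n₂ a₁ a₂ ℓ).1 : ℤ) (sel f₁ f₂ n₁ n₂ a₁ a₂ ℓ).2.1
            (sel f₁ f₂ n₁ n₂ a₁ a₂ ℓ).2.2 ℓ : ℤ))
    else 0

lemma my_sum_reindex (n : ℕ) (F : ℕ → ℤ) (h0 : ∀ a, a % 4 ≠ 1 → F a = 0) :
    ∑ a ∈ Finset.range (4*n), F a = ∑ b ∈ Finset.range n, F (1+4*b) := by
  rw [← Finset.sum_image (g := fun b => 1+4*b) (f := F)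
    (by intro x _ y _ h; dsimp at h; omega)]
  apply (Finset.sum_subset ?_ ?_).symm
  · intro a ha; simp only [Finset.mem_image, Finset.mem_range] at ha ⊢
    obtain ⟨b, hb, rfl⟩ := ha; omega
  · intro a ha hna; apply h0
    simp only [Finset.mem_image, Finset.mem_range] at ha hna
    intro hm; exact hna ⟨a/4, by omega, by omega⟩

lemma my_crt_sum {n' n'' : ℕ} (h : Nat.Coprime n' n'') (h1 : 0 < n') (h2 : 0 < n'')
    (F : ℕ → ℕ → ℤ) :
    ∑ b ∈ Finset.range (n'*n''), F (b % n') (b % n'') =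
      ∑ x ∈ Finset.range n', ∑ y ∈ Finset.range n'', F x y := by
  rw [← Finset.sum_product']
  apply Finset.sum_nbij' (i := fun b => (b % n', b % n''))
    (j := fun p => (Nat.chineseRemainder h p.1 p.2 : ℕ) % (n'*n''))
  · intro b hb
    simp only [Finset.mem_product, Finset.mem_range]
    exact ⟨Nat.mod_lt _ h1, Nat.mod_lt _ h2⟩
  · intro p hp
    simp only [Finset.mem_range]
    exact Nat.mod_lt _ (Nat.mul_pos h1 h2)
  · intro b hb
    simp only [Finset.mem_range] at hb
    have hc := (Nat.chineseRemainder h (b % n') (b % n'')).2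
    have hm : (Nat.chineseRemainder h (b % n') (b % n'') : ℕ) ≡ b [MOD n' * n''] := by
      rw [← Nat.modEq_and_modEq_iff_modEq_mul h]
      constructor
      · exact hc.1.trans (Nat.mod_modEq b n')
      · exact hc.2.trans (Nat.mod_modEq b n'')
    simpa [Nat.ModEq, Nat.mod_eq_of_lt hb] using hm
  · intro p hp
    simp only [Finset.mem_product, Finset.mem_range] at hp
    have hc := (Nat.chineseRemainder h p.1 p.2).2
    have e1 : (Nat.chineseRemainder h p.1 p.2 : ℕ) % (n' * n'') % n'
        = (Nat.chineseRemainder h p.1 p.2 : ℕ) % n' :=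
      Nat.mod_mod_of_dvd _ ⟨n'', rfl⟩
    have e2 : (Nat.chineseRemainder h p.1 p.2 : ℕ) % (n' * n'') % n''
        = (Nat.chineseRemainder h p.1 p.2 : ℕ) % n'' :=
      Nat.mod_mod_of_dvd _ ⟨n', Nat.mul_comm _ _⟩
    have := hc.1; have := hc.2
    unfold Nat.ModEq at *
    ext <;> simp only [e1, e2]
    · rw [hc.1]; exact Nat.mod_eq_of_lt hp.1
    · rw [hc.2]; exact Nat.mod_eq_of_lt hp.2
  · intro b hb; rfl

lemma my_gcd_dvd_lcm (f₁ f₂ n₁' n₁'' n₂' n₂'' : ℕ) (hf₁ : 0 < f₁) (hf₂ : 0 < f₂)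
    (h1' : 0 < n₁') (h1'' : 0 < n₁'') (h2' : 0 < n₂') (h2'' : 0 < n₂'')
    (hco : Nat.Coprime (n₁' * n₂') (n₁'' * n₂'')) :
    Nat.gcd (4 * (n₁' * n₁'') * f₁ ^ 2) (4 * (n₂' * n₂'') * f₂ ^ 2) ∣
      Nat.lcm (Nat.gcd (4 * n₁' * f₁ ^ 2) (4 * n₂' * f₂ ^ 2))
              (Nat.gcd (4 * n₁'' * f₁ ^ 2) (4 * n₂'' * f₂ ^ 2)) := by
  have z1 : (4 * n₁' * f₁ ^ 2) ≠ 0 := by positivity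
  have z2 : (4 * n₂' * f₂ ^ 2) ≠ 0 := by positivity
  have z3 : (4 * n₁'' * f₁ ^ 2) ≠ 0 := by positivity
  have z4 : (4 * n₂'' * f₂ ^ 2) ≠ 0 := by positivity
  have zg1 : Nat.gcd (4 * n₁' * f₁ ^ 2) (4 * n₂' * f₂ ^ 2) ≠ 0 := Nat.gcd_ne_zero_left z1
  have zg2 : Nat.gcd (4 * n₁'' * f₁ ^ 2) (4 * n₂'' * f₂ ^ 2) ≠ 0 := Nat.gcd_ne_zero_left z3
  have zA : (4 * (n₁' * n₁'') * f₁ ^ 2) ≠ 0 := by positivity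
  have zB : (4 * (n₂' * n₂'') * f₂ ^ 2) ≠ 0 := by positivity
  rw [← Nat.factorization_le_iff_dvd (Nat.gcd_ne_zero_left zA) (Nat.lcm_ne_zero zg1 zg2)]
  rw [Nat.factorization_gcd zA zB, Nat.factorization_lcm zg1 zg2,
    Nat.factorization_gcd z1 z2, Nat.factorization_gcd z3 z4]
  rw [Finsupp.le_def]
  intro q
  simp only [Finsupp.inf_apply, Finsupp.sup_apply]
  have e1 : (4 * (n₁' * n₁'') * f₁ ^ 2).factorization q
      = (4 * f₁ ^ 2).factorization q + n₁'.factorization q + n₁''.factorization q := by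
    have : 4 * (n₁' * n₁'') * f₁ ^ 2 = (4 * f₁ ^ 2) * n₁' * n₁'' := by ring
    rw [this, Nat.factorization_mul (by positivity) h1''.ne',
      Nat.factorization_mul (by positivity) h1'.ne']
    simp
  have e2 : (4 * (n₂' * n₂'') * f₂ ^ 2).factorization q
      = (4 * f₂ ^ 2).factorization q + n₂'.factorization q + n₂''.factorization q := by
    have : 4 * (n₂' * n₂'') * f₂ ^ 2 = (4 * f₂ ^ 2) * n₂' * n₂'' := by ring
    rw [this, Nat.factorization_mul (by positivity) h2''.ne',
      Nat.factorization_mul (by positivity) h2'.ne']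
    simp
  have e3 : (4 * n₁' * f₁ ^ 2).factorization q
      = (4 * f₁ ^ 2).factorization q + n₁'.factorization q := by
    have : 4 * n₁' * f₁ ^ 2 = (4 * f₁ ^ 2) * n₁' := by ring
    rw [this, Nat.factorization_mul (by positivity) h1'.ne']; simp
  have e4 : (4 * n₂' * f₂ ^ 2).factorization q
      = (4 * f₂ ^ 2).factorization q + n₂'.factorization q := by
    have : 4 * n₂' * f₂ ^ 2 = (4 * f₂ ^ 2) * n₂' := by ring
    rw [this, Nat.factorization_mul (by positivity) h2'.ne']; simp
  have e5 : (4 * n₁'' * f₁ ^ 2).factorization q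
      = (4 * f₁ ^ 2).factorization q + n₁''.factorization q := by
    have : 4 * n₁'' * f₁ ^ 2 = (4 * f₁ ^ 2) * n₁'' := by ring
    rw [this, Nat.factorization_mul (by positivity) h1''.ne']; simp
  have e6 : (4 * n₂'' * f₂ ^ 2).factorization q
      = (4 * f₂ ^ 2).factorization q + n₂''.factorization q := by
    have : 4 * n₂'' * f₂ ^ 2 = (4 * f₂ ^ 2) * n₂'' := by ring
    rw [this, Nat.factorization_mul (by positivity) h2''.ne']; simp
  rw [e1, e2, e3, e4, e5, e6]
  have hcase : (n₁'.factorization q = 0 ∧ n₂'.factorization q = 0) ∨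
      (n₁''.factorization q = 0 ∧ n₂''.factorization q = 0) := by
    by_cases hq : q.Prime
    case neg =>
      left
      exact ⟨Nat.factorization_eq_zero_of_not_prime _ hq,
        Nat.factorization_eq_zero_of_not_prime _ hq⟩
    by_cases hd : q ∣ n₁' * n₂'
    · right
      have hnd : ¬ q ∣ n₁'' * n₂'' := by
        intro hb
        have hq1 : q = 1 := Nat.eq_one_of_dvd_one (hco ▸ Nat.dvd_gcd hd hb)
        exact hq.one_lt.ne' hq1
      exact ⟨Nat.factorization_eq_zero_of_not_dvd (fun h => hnd (h.mul_right _)),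
        Nat.factorization_eq_zero_of_not_dvd (fun h => hnd (h.mul_left _))⟩
    · left
      exact ⟨Nat.factorization_eq_zero_of_not_dvd (fun h => hd (h.mul_right _)),
        Nat.factorization_eq_zero_of_not_dvd (fun h => hd (h.mul_left _))⟩
  have : ∀ A B x' x'' y' y'' : ℕ, ((x' = 0 ∧ y' = 0) ∨ (x'' = 0 ∧ y'' = 0)) →
      min (A + x' + x'') (B + y' + y'') ≤
        max (min (A + x') (B + y')) (min (A + x'') (B + y'')) := by
    intro A B x' x'' y' y'' h; omega
  simpa using
    this ((4 * f₁ ^ 2).factorization q) ((4 * f₂ ^ 2).factorization q) _ _ _ _ hcase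

lemma kron2_congr {a a' : ℤ} (h : a % 8 = a' % 8) : kron2 a = kron2 a' := by
  unfold kron2
  have h2 : (2 ∣ a) = (2 ∣ a') := propext (by omega)
  simp only [h, h2]

lemma kron_mul_right (a : ℤ) {m n : ℕ} (hm : m ≠ 0) (hn : n ≠ 0) :
    kron a (m * n) = kron a m * kron a n := by
  unfold kron
  rw [Nat.factorization_mul hm hn, Finsupp.add_apply, pow_add]
  have hoc : (m * n) / 2 ^ ((m.factorization 2) + (n.factorization 2))
      = (m / 2 ^ (m.factorization 2)) * (n / 2 ^ (n.factorization 2)) := by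
    have := Nat.ordCompl_mul m n 2
    simpa [Nat.factorization_mul hm hn, Finsupp.add_apply] using this
  rw [hoc, jacobiSym.mul_right' a (Nat.ordCompl_pos 2 hm).ne' (Nat.ordCompl_pos 2 hn).ne']
  ring

lemma kron_congr {a a' n : ℕ} (hn : n ≠ 0) (h : a ≡ a' [MOD 4 * n]) :
    kron (a : ℤ) n = kron (a' : ℤ) n := by
  unfold kron
  have hj : jacobiSym (a : ℤ) (n / 2 ^ (n.factorization 2))
      = jacobiSym (a' : ℤ) (n / 2 ^ (n.factorization 2)) := by
    apply jacobiSym.mod_left'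
    have hdvd : (n / 2 ^ (n.factorization 2)) ∣ 4 * n :=
      (Nat.ordCompl_dvd n 2).trans (Dvd.intro_left 4 rfl)
    have hmm := h.of_dvd hdvd
    unfold Nat.ModEq at hmm
    have h2 := congrArg (Nat.cast : ℕ → ℤ) hmm
    rwa [Int.natCast_mod, Int.natCast_mod] at h2
  rcases Nat.eq_zero_or_pos (n.factorization 2) with h0 | hpos
  · rw [h0] at hj ⊢; rw [hj]; ring
  · have h2n : 2 ∣ n := Nat.dvd_of_factorization_pos (by omega)
    have h8 : (8 : ℕ) ∣ 4 * n := by omega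
    have hm8 := h.of_dvd h8
    unfold Nat.ModEq at hm8
    have hk : kron2 (a : ℤ) = kron2 (a' : ℤ) := by
      apply kron2_congr
      omega
    rw [hk, hj]

lemma S2_congr {a a' n n' : ℕ} (hpar : 2 ∣ n ↔ 2 ∣ n') (h8 : 2 ∣ n → a % 8 = a' % 8) :
    S2fun a n = S2fun a' n' := by
  unfold S2fun
  by_cases hd : 2 ∣ n
  · rw [if_neg (not_not_intro hd), if_neg (not_not_intro (hpar.mp hd)), h8 hd]
  · rw [if_pos hd, if_pos (fun h' => hd (hpar.mpr h'))]

lemma S2_odd {a n : ℕ} (h : ¬ 2 ∣ n) : S2fun a n = 1 := by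
  unfold S2fun; rw [if_pos h]

lemma coprime_one_add_four (b : ℕ) : Nat.Coprime (1 + 4 * b) 4 := by
  have h : (1 + 4 * b) % 4 = 1 := by omega
  unfold Nat.Coprime
  rw [Nat.gcd_comm, Nat.gcd_rec]
  simp [h]

lemma coprime_congr {a a' n : ℕ} (h : a ≡ a' [MOD n]) :
    Nat.Coprime a n ↔ Nat.Coprime a' n := by
  unfold Nat.Coprime
  unfold Nat.ModEq at h
  rw [Nat.gcd_comm a n, Nat.gcd_comm a' n, Nat.gcd_rec n a, Nat.gcd_rec n a', h]

lemma coprime_factorization_cases {m₁ m₂ m₃ m₄ : ℕ} (h1 : 0 < m₁) (h2 : 0 < m₂)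
    (h3 : 0 < m₃) (h4 : 0 < m₄)
    (hco : Nat.Coprime (m₁ * m₂) (m₃ * m₄)) (q : ℕ) :
    (m₁.factorization q = 0 ∧ m₂.factorization q = 0) ∨
      (m₃.factorization q = 0 ∧ m₄.factorization q = 0) := by
  by_cases hq : q.Prime
  case neg =>
    left
    exact ⟨Nat.factorization_eq_zero_of_not_prime _ hq,
      Nat.factorization_eq_zero_of_not_prime _ hq⟩
  by_cases hd : q ∣ m₁ * m₂
  · right
    have hnd : ¬ q ∣ m₃ * m₄ := by
      intro hb
      exact hq.one_lt.ne' (Nat.eq_one_of_dvd_one (hco ▸ Nat.dvd_gcd hd hb))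
    exact ⟨Nat.factorization_eq_zero_of_not_dvd (fun h => hnd (h.mul_right _)),
      Nat.factorization_eq_zero_of_not_dvd (fun h => hnd (h.mul_left _))⟩
  · left
    exact ⟨Nat.factorization_eq_zero_of_not_dvd (fun h => hd (h.mul_right _)),
      Nat.factorization_eq_zero_of_not_dvd (fun h => hd (h.mul_left _))⟩

lemma v2_4nf (n f : ℕ) (hn : n ≠ 0) (hf : Odd f) :
    (4 * n * f ^ 2).factorization 2 = 2 + n.factorization 2 := by
  have hfo : Odd (f ^ 2) := hf.pow
  have hf2 : ¬ (2 ∣ f ^ 2) := by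
    rw [Nat.odd_iff] at hfo; omega
  have hf0 : f ≠ 0 := by rintro rfl; simp [Nat.odd_iff] at hfo
  have h4 : 4 * n * f ^ 2 = 2 ^ 2 * (n * f ^ 2) := by ring
  rw [h4, Nat.factorization_mul (by positivity) (by positivity), Finsupp.add_apply,
    Nat.factorization_mul hn (by positivity), Finsupp.add_apply,
    Nat.Prime.factorization_pow Nat.prime_two,
    Nat.factorization_eq_zero_of_not_dvd hf2, Finsupp.single_eq_same, add_zero]

lemma vodd_4nf (ℓ : ℕ) (hℓ : ℓ ≠ 2) (m : ℕ) (hm : m ≠ 0) :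
    (4 * m).factorization ℓ = m.factorization ℓ := by
  have h4 : (4 : ℕ) = 2 ^ 2 := by norm_num
  rw [Nat.factorization_mul (by norm_num) hm, Finsupp.add_apply, h4,
    Nat.Prime.factorization_pow Nat.prime_two, Finsupp.single_eq_of_ne' (Ne.symm hℓ), zero_add]

lemma v_drop (ℓ n m f : ℕ) (hn : n ≠ 0) (hm : m ≠ 0) (hf : f ≠ 0) (hnd : ¬ ℓ ∣ m) :
    (4 * (n * m) * f ^ 2).factorization ℓ = (4 * n * f ^ 2).factorization ℓ := by
  have h : 4 * (n * m) * f ^ 2 = (4 * n * f ^ 2) * m := by ring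
  rw [h, Nat.factorization_mul (by positivity) hm, Finsupp.add_apply,
    Nat.factorization_eq_zero_of_not_dvd hnd, add_zero]

lemma two_dvd_of_factorization_pos {n : ℕ} (h : n.factorization 2 ≠ 0) : 2 ∣ n :=
  Nat.dvd_of_factorization_pos h

lemma not_two_dvd_of_factorization_zero {n : ℕ} (hn : n ≠ 0) (h : n.factorization 2 = 0) :
    ¬ 2 ∣ n := by
  intro hd
  have := (Nat.Prime.factorization_pos_of_dvd Nat.prime_two hn hd)
  omega

lemma mod8_of_modEq {a a' n : ℕ} (h : a ≡ a' [MOD 4 * n]) (h2 : 2 ∣ n) :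
    a % 8 = a' % 8 := by
  have h8 : (8 : ℕ) ∣ 4 * n := by omega
  exact h.of_dvd h8

lemma S2_split (f₁ f₂ n₁' n₁'' n₂' n₂'' a₁ a₂ a₁' a₂' a₁'' a₂'' : ℕ)
    (hf₁ : Odd f₁) (hf₂ : Odd f₂)
    (h1' : 0 < n₁') (h1'' : 0 < n₁'') (h2' : 0 < n₂') (h2'' : 0 < n₂'')
    (hco : Nat.Coprime (n₁' * n₂') (n₁'' * n₂''))
    (hm₁' : a₁ ≡ a₁' [MOD 4 * n₁']) (hm₂' : a₂ ≡ a₂' [MOD 4 * n₂'])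
    (hm₁'' : a₁ ≡ a₁'' [MOD 4 * n₁'']) (hm₂'' : a₂ ≡ a₂'' [MOD 4 * n₂'']) :
    S2fun (sel f₁ f₂ (n₁' * n₁'') (n₂' * n₂'') a₁ a₂ 2).1
        (sel f₁ f₂ (n₁' * n₁'') (n₂' * n₂'') a₁ a₂ 2).2.2 =
      S2fun (sel f₁ f₂ n₁' n₂' a₁' a₂' 2).1 (sel f₁ f₂ n₁' n₂' a₁' a₂' 2).2.2 *
      S2fun (sel f₁ f₂ n₁'' n₂'' a₁'' a₂'' 2).1 (sel f₁ f₂ n₁'' n₂'' a₁'' a₂'' 2).2.2 := by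
  have hv1 : (4 * (n₁' * n₁'') * f₁ ^ 2).factorization 2
      = 2 + (n₁'.factorization 2 + n₁''.factorization 2) := by
    rw [v2_4nf _ _ (by positivity) hf₁, Nat.factorization_mul h1'.ne' h1''.ne',
      Finsupp.add_apply]
  have hv2 : (4 * (n₂' * n₂'') * f₂ ^ 2).factorization 2
      = 2 + (n₂'.factorization 2 + n₂''.factorization 2) := by
    rw [v2_4nf _ _ (by positivity) hf₂, Nat.factorization_mul h2'.ne' h2''.ne',
      Finsupp.add_apply]
  have hw1' : (4 * n₁' * f₁ ^ 2).factorization 2 = 2 + n₁'.factorization 2 :=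
    v2_4nf _ _ h1'.ne' hf₁
  have hw2' : (4 * n₂' * f₂ ^ 2).factorization 2 = 2 + n₂'.factorization 2 :=
    v2_4nf _ _ h2'.ne' hf₂
  have hw1'' : (4 * n₁'' * f₁ ^ 2).factorization 2 = 2 + n₁''.factorization 2 :=
    v2_4nf _ _ h1''.ne' hf₁
  have hw2'' : (4 * n₂'' * f₂ ^ 2).factorization 2 = 2 + n₂''.factorization 2 :=
    v2_4nf _ _ h2''.ne' hf₂
  rcases coprime_factorization_cases h1' h2' h1'' h2'' hco 2 with ⟨hz1, hz2⟩ | ⟨hz1, hz2⟩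
  · -- n₁', n₂' have no factor 2; double-primed side may be even
    have ho1 : ¬ 2 ∣ n₁' := not_two_dvd_of_factorization_zero h1'.ne' hz1
    have ho2 : ¬ 2 ∣ n₂' := not_two_dvd_of_factorization_zero h2'.ne' hz2
    rw [show sel f₁ f₂ n₁' n₂' a₁' a₂' 2 = (a₁', f₁, n₁') from
      if_pos (by rw [hw1', hw2']; omega)]
    simp only
    rw [S2_odd ho1, one_mul]
    by_cases hC : (4 * n₂'' * f₂ ^ 2).factorization 2 ≤ (4 * n₁'' * f₁ ^ 2).factorization 2
    · rw [show sel f₁ f₂ (n₁' * n₁'') (n₂' * n₂'') a₁ a₂ 2 = (a₁, f₁, n₁' * n₁'') from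
        if_pos (by rw [hv1, hv2, hw1'', hw2''] at *; omega),
        show sel f₁ f₂ n₁'' n₂'' a₁'' a₂'' 2 = (a₁'', f₁, n₁'') from if_pos hC]
      simp only
      apply S2_congr
      · rw [Nat.Prime.dvd_mul Nat.prime_two]
        constructor
        · rintro (h | h)
          · exact absurd h ho1
          · exact h
        · exact fun h => Or.inr h
      · intro hd
        have : 2 ∣ n₁'' := by
          rcases (Nat.Prime.dvd_mul Nat.prime_two).mp hd with h | h
          · exact absurd h ho1
          · exact h
        exact mod8_of_modEq hm₁'' this
    · rw [show sel f₁ f₂ (n₁' * n₁'') (n₂' * n₂'') a₁ a₂ 2 = (a₂, f₂, n₂' * n₂'') from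
        if_neg (by rw [hv1, hv2, hw1'', hw2''] at *; omega),
        show sel f₁ f₂ n₁'' n₂'' a₁'' a₂'' 2 = (a₂'', f₂, n₂'') from if_neg hC]
      simp only
      apply S2_congr
      · rw [Nat.Prime.dvd_mul Nat.prime_two]
        constructor
        · rintro (h | h)
          · exact absurd h ho2
          · exact h
        · exact fun h => Or.inr h
      · intro hd
        have : 2 ∣ n₂'' := by
          rcases (Nat.Prime.dvd_mul Nat.prime_two).mp hd with h | h
          · exact absurd h ho2
          · exact h
        exact mod8_of_modEq hm₂'' this
  · -- n₁'', n₂'' have no factor 2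
    have ho1 : ¬ 2 ∣ n₁'' := not_two_dvd_of_factorization_zero h1''.ne' hz1
    have ho2 : ¬ 2 ∣ n₂'' := not_two_dvd_of_factorization_zero h2''.ne' hz2
    rw [show sel f₁ f₂ n₁'' n₂'' a₁'' a₂'' 2 = (a₁'', f₁, n₁'') from
      if_pos (by rw [hw1'', hw2'']; omega)]
    simp only
    rw [S2_odd ho1, mul_one]
    by_cases hC : (4 * n₂' * f₂ ^ 2).factorization 2 ≤ (4 * n₁' * f₁ ^ 2).factorization 2
    · rw [show sel f₁ f₂ (n₁' * n₁'') (n₂' * n₂'') a₁ a₂ 2 = (a₁, f₁, n₁' * n₁'') from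
        if_pos (by rw [hv1, hv2, hw1', hw2'] at *; omega),
        show sel f₁ f₂ n₁' n₂' a₁' a₂' 2 = (a₁', f₁, n₁') from if_pos hC]
      simp only
      apply S2_congr
      · rw [Nat.Prime.dvd_mul Nat.prime_two]
        constructor
        · rintro (h | h)
          · exact h
          · exact absurd h ho1
        · exact fun h => Or.inl h
      · intro hd
        have : 2 ∣ n₁' := by
          rcases (Nat.Prime.dvd_mul Nat.prime_two).mp hd with h | h
          · exact h
          · exact absurd h ho1
        exact mod8_of_modEq hm₁' this
    · rw [show sel f₁ f₂ (n₁' * n₁'') (n₂' * n₂'') a₁ a₂ 2 = (a₂, f₂, n₂' * n₂'') from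
        if_neg (by rw [hv1, hv2, hw1', hw2'] at *; omega),
        show sel f₁ f₂ n₁' n₂' a₁' a₂' 2 = (a₂', f₂, n₂') from if_neg hC]
      simp only
      apply S2_congr
      · rw [Nat.Prime.dvd_mul Nat.prime_two]
        constructor
        · rintro (h | h)
          · exact h
          · exact absurd h ho2
        · exact fun h => Or.inl h
      · intro hd
        have : 2 ∣ n₂' := by
          rcases (Nat.Prime.dvd_mul Nat.prime_two).mp hd with h | h
          · exact h
          · exact absurd h ho2
        exact mod8_of_modEq hm₂' this

lemma Cpl_congr (p : ℕ) (a a' : ℤ) (f n m ℓ : ℕ)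
    (he : (4 * n * f ^ 2).factorization ℓ = (4 * m * f ^ 2).factorization ℓ)
    (hd : ((ℓ : ℤ)) ^ ((4 * m * f ^ 2).factorization ℓ) ∣ a * (f : ℤ) ^ 2 - a' * (f : ℤ) ^ 2) :
    Cpl p a f n ℓ = Cpl p a' f m ℓ := by
  classical
  unfold Cpl
  rw [he]
  congr 1
  apply Finset.filter_congr
  intro x _
  have key : (((ℓ : ℤ)) ^ ((4 * m * f ^ 2).factorization ℓ) ∣ Dfun (p : ℤ) (x : ℤ) - a * (f : ℤ) ^ 2)
      ↔ (((ℓ : ℤ)) ^ ((4 * m * f ^ 2).factorization ℓ) ∣ Dfun (p : ℤ) (x : ℤ) - a' * (f : ℤ) ^ 2) := by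
    constructor <;> intro h
    · have h2 := dvd_add h hd
      have e : Dfun (p : ℤ) (x : ℤ) - a * (f : ℤ) ^ 2 + (a * (f : ℤ) ^ 2 - a' * (f : ℤ) ^ 2)
          = Dfun (p : ℤ) (x : ℤ) - a' * (f : ℤ) ^ 2 := by ring
      rwa [e] at h2
    · have h2 := dvd_sub h hd
      have e : Dfun (p : ℤ) (x : ℤ) - a' * (f : ℤ) ^ 2 - (a * (f : ℤ) ^ 2 - a' * (f : ℤ) ^ 2)
          = Dfun (p : ℤ) (x : ℤ) - a * (f : ℤ) ^ 2 := by ring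
      rwa [e] at h2
  rw [key]

lemma modEq_int_dvd {a a' n : ℕ} (h : a ≡ a' [MOD n]) : (n : ℤ) ∣ (a : ℤ) - (a' : ℤ) := by
  have := (Nat.modEq_iff_dvd).mp h
  exact dvd_sub_comm.mp this

lemma Cpl_sel (p f₁ f₂ n₁' n₁'' n₂' n₂'' a₁ a₂ a₁' a₂' ℓ : ℕ) (hℓ2 : ℓ ≠ 2)
    (hf₁0 : 0 < f₁) (hf₂0 : 0 < f₂) (h1' : 0 < n₁') (h1'' : 0 < n₁'')
    (h2' : 0 < n₂') (h2'' : 0 < n₂'')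
    (hnd1 : ¬ ℓ ∣ n₁'') (hnd2 : ¬ ℓ ∣ n₂'')
    (hm₁ : a₁ ≡ a₁' [MOD 4 * n₁']) (hm₂ : a₂ ≡ a₂' [MOD 4 * n₂']) :
    Cpl p ((sel f₁ f₂ (n₁' * n₁'') (n₂' * n₂'') a₁ a₂ ℓ).1 : ℤ)
        (sel f₁ f₂ (n₁' * n₁'') (n₂' * n₂'') a₁ a₂ ℓ).2.1
        (sel f₁ f₂ (n₁' * n₁'') (n₂' * n₂'') a₁ a₂ ℓ).2.2 ℓ
      = Cpl p ((sel f₁ f₂ n₁' n₂' a₁' a₂' ℓ).1 : ℤ) (sel f₁ f₂ n₁' n₂' a₁' a₂' ℓ).2.1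
          (sel f₁ f₂ n₁' n₂' a₁' a₂' ℓ).2.2 ℓ := by
  have hv₁ := v_drop ℓ n₁' n₁'' f₁ h1'.ne' h1''.ne' hf₁0.ne' hnd1
  have hv₂ := v_drop ℓ n₂' n₂'' f₂ h2'.ne' h2''.ne' hf₂0.ne' hnd2
  have hdvd : ∀ (n f a a' : ℕ), 0 < n → 0 < f → a ≡ a' [MOD 4 * n] →
      ((ℓ : ℤ)) ^ ((4 * n * f ^ 2).factorization ℓ) ∣
        (a : ℤ) * (f : ℤ) ^ 2 - (a' : ℤ) * (f : ℤ) ^ 2 := by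
    intro n f a a' hn hf hm
    have e : (4 * n * f ^ 2).factorization ℓ = (n * f ^ 2).factorization ℓ := by
      rw [mul_assoc]
      exact vodd_4nf ℓ hℓ2 _ (by positivity)
    have h1 : (ℓ : ℕ) ^ ((n * f ^ 2).factorization ℓ) ∣ n * f ^ 2 := Nat.ordProj_dvd _ _
    have hint : (n : ℤ) ∣ (a : ℤ) - (a' : ℤ) := by
      have h4 := modEq_int_dvd hm
      have : (n : ℤ) ∣ ((4 * n : ℕ) : ℤ) := by push_cast; exact Dvd.intro_left 4 rfl
      exact dvd_trans this h4
    have h2 : ((n * f ^ 2 : ℕ) : ℤ) ∣ (a : ℤ) * (f : ℤ) ^ 2 - (a' : ℤ) * (f : ℤ) ^ 2 := by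
      push_cast
      have := mul_dvd_mul hint (dvd_refl ((f : ℤ) ^ 2))
      have e2 : ((a : ℤ) - (a' : ℤ)) * (f : ℤ) ^ 2
          = (a : ℤ) * (f : ℤ) ^ 2 - (a' : ℤ) * (f : ℤ) ^ 2 := by ring
      rwa [e2] at this
    have h3 : ((ℓ : ℤ)) ^ ((n * f ^ 2).factorization ℓ) ∣ ((n * f ^ 2 : ℕ) : ℤ) := by
      exact_mod_cast Int.natCast_dvd_natCast.mpr h1
    rw [e]
    exact dvd_trans h3 h2
  by_cases hC : (4 * n₂' * f₂ ^ 2).factorization ℓ ≤ (4 * n₁' * f₁ ^ 2).factorization ℓ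
  · rw [show sel f₁ f₂ (n₁' * n₁'') (n₂' * n₂'') a₁ a₂ ℓ = (a₁, f₁, n₁' * n₁'') from
      if_pos (by rw [hv₁, hv₂]; exact hC),
      show sel f₁ f₂ n₁' n₂' a₁' a₂' ℓ = (a₁', f₁, n₁') from if_pos hC]
    exact Cpl_congr p a₁ a₁' f₁ (n₁' * n₁'') n₁' ℓ hv₁ (hdvd n₁' f₁ a₁ a₁' h1' hf₁0 hm₁)
  · rw [show sel f₁ f₂ (n₁' * n₁'') (n₂' * n₂'') a₁ a₂ ℓ = (a₂, f₂, n₂' * n₂'') from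
      if_neg (by rw [hv₁, hv₂]; exact hC),
      show sel f₁ f₂ n₁' n₂' a₁' a₂' ℓ = (a₂', f₂, n₂') from if_neg hC]
    exact Cpl_congr p a₂ a₂' f₂ (n₂' * n₂'') n₂' ℓ hv₂ (hdvd n₂' f₂ a₂ a₂' h2' hf₂0 hm₂)


/-- The summand of `Cpf`. -/
def Tterm (p f₁ f₂ n₁ n₂ a₁ a₂ : ℕ) : ℤ :=
  if Nat.Coprime a₁ (4 * n₁) ∧ Nat.Coprime a₂ (4 * n₂) ∧ a₁ % 4 = 1 ∧ a₂ % 4 = 1 ∧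
      (a₁ * f₁ ^ 2) % (Nat.gcd (4 * n₁ * f₁ ^ 2) (4 * n₂ * f₂ ^ 2)) =
        (a₂ * f₂ ^ 2) % (Nat.gcd (4 * n₁ * f₁ ^ 2) (4 * n₂ * f₂ ^ 2)) then
    kron (a₁ : ℤ) n₁ * kron (a₂ : ℤ) n₂ *
    S2fun (sel f₁ f₂ n₁ n₂ a₁ a₂ 2).1 (sel f₁ f₂ n₁ n₂ a₁ a₂ 2).2.2 *
    ∏ ℓ ∈ ((n₁ * n₂).primeFactors.erase 2),
      ((Cpl p ((sel f₁ f₂ n₁ n₂ a₁ a₂ ℓ).1 : ℤ) (sel f₁ f₂ n₁ n₂ a₁ a₂ ℓ).2.1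
          (sel f₁ f₂ n₁ n₂ a₁ a₂ ℓ).2.2 ℓ : ℤ))
  else 0

lemma Cpf_eq_sum (p f₁ f₂ n₁ n₂ : ℕ) :
    Cpf p f₁ f₂ n₁ n₂ = ∑ a₁ ∈ Finset.range (4 * n₁), ∑ a₂ ∈ Finset.range (4 * n₂),
      Tterm p f₁ f₂ n₁ n₂ a₁ a₂ := rfl

lemma Tterm_zero₁ {p f₁ f₂ n₁ n₂ a₁ a₂ : ℕ} (h : a₁ % 4 ≠ 1) :
    Tterm p f₁ f₂ n₁ n₂ a₁ a₂ = 0 := by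
  unfold Tterm
  exact if_neg (fun hc => h hc.2.2.1)

lemma Tterm_zero₂ {p f₁ f₂ n₁ n₂ a₁ a₂ : ℕ} (h : a₂ % 4 ≠ 1) :
    Tterm p f₁ f₂ n₁ n₂ a₁ a₂ = 0 := by
  unfold Tterm
  exact if_neg (fun hc => h hc.2.2.2.1)

lemma Cpf_eq (p f₁ f₂ n₁ n₂ : ℕ) :
    Cpf p f₁ f₂ n₁ n₂ = ∑ b₁ ∈ Finset.range n₁, ∑ b₂ ∈ Finset.range n₂,
      Tterm p f₁ f₂ n₁ n₂ (1 + 4 * b₁) (1 + 4 * b₂) := by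
  rw [Cpf_eq_sum]
  rw [my_sum_reindex n₁ (fun a₁ => ∑ a₂ ∈ Finset.range (4 * n₂), Tterm p f₁ f₂ n₁ n₂ a₁ a₂)
    (fun a ha => Finset.sum_eq_zero (fun a₂ _ => Tterm_zero₁ ha))]
  exact Finset.sum_congr rfl (fun b₁ _ =>
    my_sum_reindex n₂ (fun a₂ => Tterm p f₁ f₂ n₁ n₂ (1 + 4 * b₁) a₂)
      (fun a ha => Tterm_zero₂ ha))

lemma prod_split (p f₁ f₂ n₁' n₁'' n₂' n₂'' a₁ a₂ a₁' a₂' a₁'' a₂'' : ℕ)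
    (hf₁0 : 0 < f₁) (hf₂0 : 0 < f₂)
    (h1' : 0 < n₁') (h1'' : 0 < n₁'') (h2' : 0 < n₂') (h2'' : 0 < n₂'')
    (hco : Nat.Coprime (n₁' * n₂') (n₁'' * n₂''))
    (hm₁' : a₁ ≡ a₁' [MOD 4 * n₁']) (hm₂' : a₂ ≡ a₂' [MOD 4 * n₂'])
    (hm₁'' : a₁ ≡ a₁'' [MOD 4 * n₁'']) (hm₂'' : a₂ ≡ a₂'' [MOD 4 * n₂'']) :
    (∏ ℓ ∈ ((n₁' * n₁'' * (n₂' * n₂'')).primeFactors.erase 2),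
      ((Cpl p ((sel f₁ f₂ (n₁' * n₁'') (n₂' * n₂'') a₁ a₂ ℓ).1 : ℤ)
          (sel f₁ f₂ (n₁' * n₁'') (n₂' * n₂'') a₁ a₂ ℓ).2.1
          (sel f₁ f₂ (n₁' * n₁'') (n₂' * n₂'') a₁ a₂ ℓ).2.2 ℓ : ℤ)))
    = (∏ ℓ ∈ ((n₁' * n₂').primeFactors.erase 2),
        ((Cpl p ((sel f₁ f₂ n₁' n₂' a₁' a₂' ℓ).1 : ℤ) (sel f₁ f₂ n₁' n₂' a₁' a₂' ℓ).2.1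
            (sel f₁ f₂ n₁' n₂' a₁' a₂' ℓ).2.2 ℓ : ℤ))) *
      (∏ ℓ ∈ ((n₁'' * n₂'').primeFactors.erase 2),
        ((Cpl p ((sel f₁ f₂ n₁'' n₂'' a₁'' a₂'' ℓ).1 : ℤ) (sel f₁ f₂ n₁'' n₂'' a₁'' a₂'' ℓ).2.1
            (sel f₁ f₂ n₁'' n₂'' a₁'' a₂'' ℓ).2.2 ℓ : ℤ))) := by
  have hset : ((n₁' * n₁'' * (n₂' * n₂'')).primeFactors.erase 2)
      = ((n₁' * n₂').primeFactors.erase 2) ∪ ((n₁'' * n₂'').primeFactors.erase 2) := by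
    rw [show n₁' * n₁'' * (n₂' * n₂'') = (n₁' * n₂') * (n₁'' * n₂'') from by ring,
      Nat.primeFactors_mul (by positivity) (by positivity), Finset.erase_union_distrib]
  have hdis : Disjoint ((n₁' * n₂').primeFactors.erase 2)
      ((n₁'' * n₂'').primeFactors.erase 2) :=
    (hco.disjoint_primeFactors).mono (Finset.erase_subset _ _) (Finset.erase_subset _ _)
  rw [hset, Finset.prod_union hdis]
  congr 1
  · apply Finset.prod_congr rfl
    intro ℓ hℓ
    rw [Finset.mem_erase, Nat.mem_primeFactors] at hℓ
    obtain ⟨hℓ2, hℓp, hℓd, -⟩ := hℓ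
    have hnd : ¬ ℓ ∣ n₁'' * n₂'' := by
      intro hb
      exact hℓp.one_lt.ne' (Nat.eq_one_of_dvd_one (hco ▸ Nat.dvd_gcd hℓd hb))
    exact congrArg _ (Cpl_sel p f₁ f₂ n₁' n₁'' n₂' n₂'' a₁ a₂ a₁' a₂' ℓ hℓ2 hf₁0 hf₂0
      h1' h1'' h2' h2'' (fun h => hnd (h.mul_right _)) (fun h => hnd (h.mul_left _)) hm₁' hm₂')
  · apply Finset.prod_congr rfl
    intro ℓ hℓ
    rw [Finset.mem_erase, Nat.mem_primeFactors] at hℓ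
    obtain ⟨hℓ2, hℓp, hℓd, -⟩ := hℓ
    have hnd : ¬ ℓ ∣ n₁' * n₂' := by
      intro hb
      exact hℓp.one_lt.ne' (Nat.eq_one_of_dvd_one (hco ▸ Nat.dvd_gcd hb hℓd))
    rw [mul_comm n₁' n₁'', mul_comm n₂' n₂'']
    exact congrArg _ (Cpl_sel p f₁ f₂ n₁'' n₁' n₂'' n₂' a₁ a₂ a₁'' a₂'' ℓ hℓ2 hf₁0 hf₂0
      h1'' h1' h2'' h2' (fun h => hnd (h.mul_right _)) (fun h => hnd (h.mul_left _)) hm₁'' hm₂'')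

lemma T_split (p f₁ f₂ : ℕ) (hf₁ : Odd f₁) (hf₂ : Odd f₂) (hf₁0 : 0 < f₁) (hf₂0 : 0 < f₂)
    (n₁' n₁'' n₂' n₂'' : ℕ) (h1' : 0 < n₁') (h1'' : 0 < n₁'') (h2' : 0 < n₂') (h2'' : 0 < n₂'')
    (hco : Nat.Coprime (n₁' * n₂') (n₁'' * n₂'')) (b₁ b₂ : ℕ) :
    Tterm p f₁ f₂ (n₁' * n₁'') (n₂' * n₂'') (1 + 4 * b₁) (1 + 4 * b₂) =
      Tterm p f₁ f₂ n₁' n₂' (1 + 4 * (b₁ % n₁')) (1 + 4 * (b₂ % n₂')) *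
      Tterm p f₁ f₂ n₁'' n₂'' (1 + 4 * (b₁ % n₁'')) (1 + 4 * (b₂ % n₂'')) := by
  have hm₁' : (1 + 4 * b₁) ≡ (1 + 4 * (b₁ % n₁')) [MOD 4 * n₁'] :=
    Nat.ModEq.add_left 1 (((Nat.mod_modEq b₁ n₁').symm).mul_left' 4)
  have hm₂' : (1 + 4 * b₂) ≡ (1 + 4 * (b₂ % n₂')) [MOD 4 * n₂'] :=
    Nat.ModEq.add_left 1 (((Nat.mod_modEq b₂ n₂').symm).mul_left' 4)
  have hm₁'' : (1 + 4 * b₁) ≡ (1 + 4 * (b₁ % n₁'')) [MOD 4 * n₁''] :=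
    Nat.ModEq.add_left 1 (((Nat.mod_modEq b₁ n₁'').symm).mul_left' 4)
  have hm₂'' : (1 + 4 * b₂) ≡ (1 + 4 * (b₂ % n₂'')) [MOD 4 * n₂''] :=
    Nat.ModEq.add_left 1 (((Nat.mod_modEq b₂ n₂'').symm).mul_left' 4)
  set a₁ := 1 + 4 * b₁ with ha₁
  set a₂ := 1 + 4 * b₂ with ha₂
  set a₁' := 1 + 4 * (b₁ % n₁') with ha₁'
  set a₂' := 1 + 4 * (b₂ % n₂') with ha₂'
  set a₁'' := 1 + 4 * (b₁ % n₁'') with ha₁''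
  set a₂'' := 1 + 4 * (b₂ % n₂'') with ha₂''
  -- coprimality splitting
  have hcop₁ : Nat.Coprime a₁ (4 * (n₁' * n₁'')) ↔
      (Nat.Coprime a₁' (4 * n₁') ∧ Nat.Coprime a₁'' (4 * n₁'')) := by
    have t1 := coprime_congr (n := n₁') (hm₁'.of_dvd (dvd_mul_left n₁' 4))
    have t2 := coprime_congr (n := n₁'') (hm₁''.of_dvd (dvd_mul_left n₁'' 4))
    simp only [Nat.coprime_mul_iff_right]
    constructor
    · rintro ⟨h4, h', h''⟩
      exact ⟨⟨coprime_one_add_four _, t1.mp h'⟩, ⟨coprime_one_add_four _, t2.mp h''⟩⟩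
    · rintro ⟨⟨h4, h'⟩, ⟨h5, h''⟩⟩
      exact ⟨coprime_one_add_four _, t1.mpr h', t2.mpr h''⟩
  have hcop₂ : Nat.Coprime a₂ (4 * (n₂' * n₂'')) ↔
      (Nat.Coprime a₂' (4 * n₂') ∧ Nat.Coprime a₂'' (4 * n₂'')) := by
    have t1 := coprime_congr (n := n₂') (hm₂'.of_dvd (dvd_mul_left n₂' 4))
    have t2 := coprime_congr (n := n₂'') (hm₂''.of_dvd (dvd_mul_left n₂'' 4))
    simp only [Nat.coprime_mul_iff_right]
    constructor
    · rintro ⟨h4, h', h''⟩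
      exact ⟨⟨coprime_one_add_four _, t1.mp h'⟩, ⟨coprime_one_add_four _, t2.mp h''⟩⟩
    · rintro ⟨⟨h4, h'⟩, ⟨h5, h''⟩⟩
      exact ⟨coprime_one_add_four _, t1.mpr h', t2.mpr h''⟩
  -- the congruence condition splitting
  have hmc₁' : a₁ * f₁ ^ 2 ≡ a₁' * f₁ ^ 2 [MOD 4 * n₁' * f₁ ^ 2] := hm₁'.mul_right' _
  have hmc₂' : a₂ * f₂ ^ 2 ≡ a₂' * f₂ ^ 2 [MOD 4 * n₂' * f₂ ^ 2] := hm₂'.mul_right' _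
  have hmc₁'' : a₁ * f₁ ^ 2 ≡ a₁'' * f₁ ^ 2 [MOD 4 * n₁'' * f₁ ^ 2] := hm₁''.mul_right' _
  have hmc₂'' : a₂ * f₂ ^ 2 ≡ a₂'' * f₂ ^ 2 [MOD 4 * n₂'' * f₂ ^ 2] := hm₂''.mul_right' _
  have hg' : Nat.gcd (4 * n₁' * f₁ ^ 2) (4 * n₂' * f₂ ^ 2)
      ∣ Nat.gcd (4 * (n₁' * n₁'') * f₁ ^ 2) (4 * (n₂' * n₂'') * f₂ ^ 2) :=
    Nat.dvd_gcd ((Nat.gcd_dvd_left _ _).trans ⟨n₁'', by ring⟩)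
      ((Nat.gcd_dvd_right _ _).trans ⟨n₂'', by ring⟩)
  have hg'' : Nat.gcd (4 * n₁'' * f₁ ^ 2) (4 * n₂'' * f₂ ^ 2)
      ∣ Nat.gcd (4 * (n₁' * n₁'') * f₁ ^ 2) (4 * (n₂' * n₂'') * f₂ ^ 2) :=
    Nat.dvd_gcd ((Nat.gcd_dvd_left _ _).trans ⟨n₁', by ring⟩)
      ((Nat.gcd_dvd_right _ _).trans ⟨n₂', by ring⟩)
  have hmc : ((a₁ * f₁ ^ 2) % (Nat.gcd (4 * (n₁' * n₁'') * f₁ ^ 2) (4 * (n₂' * n₂'') * f₂ ^ 2)) =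
        (a₂ * f₂ ^ 2) % (Nat.gcd (4 * (n₁' * n₁'') * f₁ ^ 2) (4 * (n₂' * n₂'') * f₂ ^ 2))) ↔
      (((a₁' * f₁ ^ 2) % (Nat.gcd (4 * n₁' * f₁ ^ 2) (4 * n₂' * f₂ ^ 2)) =
        (a₂' * f₂ ^ 2) % (Nat.gcd (4 * n₁' * f₁ ^ 2) (4 * n₂' * f₂ ^ 2))) ∧
       ((a₁'' * f₁ ^ 2) % (Nat.gcd (4 * n₁'' * f₁ ^ 2) (4 * n₂'' * f₂ ^ 2)) =
        (a₂'' * f₂ ^ 2) % (Nat.gcd (4 * n₁'' * f₁ ^ 2) (4 * n₂'' * f₂ ^ 2)))) := by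
    constructor
    · intro h
      have h' : a₁ * f₁ ^ 2 ≡ a₂ * f₂ ^ 2
          [MOD Nat.gcd (4 * n₁' * f₁ ^ 2) (4 * n₂' * f₂ ^ 2)] := Nat.ModEq.of_dvd hg' h
      have h'' : a₁ * f₁ ^ 2 ≡ a₂ * f₂ ^ 2
          [MOD Nat.gcd (4 * n₁'' * f₁ ^ 2) (4 * n₂'' * f₂ ^ 2)] := Nat.ModEq.of_dvd hg'' h
      constructor
      · exact ((hmc₁'.of_dvd (Nat.gcd_dvd_left _ _)).symm.trans h').trans
          (hmc₂'.of_dvd (Nat.gcd_dvd_right _ _))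
      · exact ((hmc₁''.of_dvd (Nat.gcd_dvd_left _ _)).symm.trans h'').trans
          (hmc₂''.of_dvd (Nat.gcd_dvd_right _ _))
    · rintro ⟨h', h''⟩
      have c' : a₁ * f₁ ^ 2 ≡ a₂ * f₂ ^ 2
          [MOD Nat.gcd (4 * n₁' * f₁ ^ 2) (4 * n₂' * f₂ ^ 2)] :=
        ((hmc₁'.of_dvd (Nat.gcd_dvd_left _ _)).trans h').trans
          (hmc₂'.of_dvd (Nat.gcd_dvd_right _ _)).symm
      have c'' : a₁ * f₁ ^ 2 ≡ a₂ * f₂ ^ 2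
          [MOD Nat.gcd (4 * n₁'' * f₁ ^ 2) (4 * n₂'' * f₂ ^ 2)] :=
        ((hmc₁''.of_dvd (Nat.gcd_dvd_left _ _)).trans h'').trans
          (hmc₂''.of_dvd (Nat.gcd_dvd_right _ _)).symm
      have d' := Nat.modEq_iff_dvd.mp c'
      have d'' := Nat.modEq_iff_dvd.mp c''
      have hL : ((Nat.lcm (Nat.gcd (4 * n₁' * f₁ ^ 2) (4 * n₂' * f₂ ^ 2))
          (Nat.gcd (4 * n₁'' * f₁ ^ 2) (4 * n₂'' * f₂ ^ 2)) : ℕ) : ℤ)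
          ∣ ((a₂ * f₂ ^ 2 : ℕ) : ℤ) - ((a₁ * f₁ ^ 2 : ℕ) : ℤ) := by
        rw [Int.natCast_dvd] at d' d'' ⊢
        exact Nat.lcm_dvd d' d''
      have hgl := my_gcd_dvd_lcm f₁ f₂ n₁' n₁'' n₂' n₂'' hf₁0 hf₂0 h1' h1'' h2' h2'' hco
      apply Nat.modEq_iff_dvd.mpr
      exact dvd_trans (Int.natCast_dvd_natCast.mpr hgl) hL
  have hcond : (Nat.Coprime a₁ (4 * (n₁' * n₁'')) ∧ Nat.Coprime a₂ (4 * (n₂' * n₂'')) ∧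
        a₁ % 4 = 1 ∧ a₂ % 4 = 1 ∧
        (a₁ * f₁ ^ 2) % (Nat.gcd (4 * (n₁' * n₁'') * f₁ ^ 2) (4 * (n₂' * n₂'') * f₂ ^ 2)) =
          (a₂ * f₂ ^ 2) % (Nat.gcd (4 * (n₁' * n₁'') * f₁ ^ 2) (4 * (n₂' * n₂'') * f₂ ^ 2))) ↔
      ((Nat.Coprime a₁' (4 * n₁') ∧ Nat.Coprime a₂' (4 * n₂') ∧
        a₁' % 4 = 1 ∧ a₂' % 4 = 1 ∧
        (a₁' * f₁ ^ 2) % (Nat.gcd (4 * n₁' * f₁ ^ 2) (4 * n₂' * f₂ ^ 2)) =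
          (a₂' * f₂ ^ 2) % (Nat.gcd (4 * n₁' * f₁ ^ 2) (4 * n₂' * f₂ ^ 2))) ∧
       (Nat.Coprime a₁'' (4 * n₁'') ∧ Nat.Coprime a₂'' (4 * n₂'') ∧
        a₁'' % 4 = 1 ∧ a₂'' % 4 = 1 ∧
        (a₁'' * f₁ ^ 2) % (Nat.gcd (4 * n₁'' * f₁ ^ 2) (4 * n₂'' * f₂ ^ 2)) =
          (a₂'' * f₂ ^ 2) % (Nat.gcd (4 * n₁'' * f₁ ^ 2) (4 * n₂'' * f₂ ^ 2)))) := by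
    have m1 : a₁ % 4 = 1 := by omega
    have m2 : a₂ % 4 = 1 := by omega
    have m1' : a₁' % 4 = 1 := by omega
    have m2' : a₂' % 4 = 1 := by omega
    have m1'' : a₁'' % 4 = 1 := by omega
    have m2'' : a₂'' % 4 = 1 := by omega
    constructor
    · rintro ⟨c₁, c₂, -, -, mc⟩
      obtain ⟨mc', mc''⟩ := hmc.mp mc
      exact ⟨⟨(hcop₁.mp c₁).1, (hcop₂.mp c₂).1, m1', m2', mc'⟩,
        ⟨(hcop₁.mp c₁).2, (hcop₂.mp c₂).2, m1'', m2'', mc''⟩⟩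
    · rintro ⟨⟨c₁', c₂', -, -, mc'⟩, ⟨c₁'', c₂'', -, -, mc''⟩⟩
      exact ⟨hcop₁.mpr ⟨c₁', c₁''⟩, hcop₂.mpr ⟨c₂', c₂''⟩, m1, m2, hmc.mpr ⟨mc', mc''⟩⟩
  unfold Tterm
  by_cases hC' : (Nat.Coprime a₁' (4 * n₁') ∧ Nat.Coprime a₂' (4 * n₂') ∧
        a₁' % 4 = 1 ∧ a₂' % 4 = 1 ∧
        (a₁' * f₁ ^ 2) % (Nat.gcd (4 * n₁' * f₁ ^ 2) (4 * n₂' * f₂ ^ 2)) =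
          (a₂' * f₂ ^ 2) % (Nat.gcd (4 * n₁' * f₁ ^ 2) (4 * n₂' * f₂ ^ 2)))
  · by_cases hC'' : (Nat.Coprime a₁'' (4 * n₁'') ∧ Nat.Coprime a₂'' (4 * n₂'') ∧
        a₁'' % 4 = 1 ∧ a₂'' % 4 = 1 ∧
        (a₁'' * f₁ ^ 2) % (Nat.gcd (4 * n₁'' * f₁ ^ 2) (4 * n₂'' * f₂ ^ 2)) =
          (a₂'' * f₂ ^ 2) % (Nat.gcd (4 * n₁'' * f₁ ^ 2) (4 * n₂'' * f₂ ^ 2)))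
    · rw [if_pos (hcond.mpr ⟨hC', hC''⟩), if_pos hC', if_pos hC'']
      have hk₁ : kron (a₁ : ℤ) (n₁' * n₁'') = kron (a₁' : ℤ) n₁' * kron (a₁'' : ℤ) n₁'' := by
        rw [kron_mul_right _ h1'.ne' h1''.ne', kron_congr h1'.ne' hm₁',
          kron_congr h1''.ne' hm₁'']
      have hk₂ : kron (a₂ : ℤ) (n₂' * n₂'') = kron (a₂' : ℤ) n₂' * kron (a₂'' : ℤ) n₂'' := by
        rw [kron_mul_right _ h2'.ne' h2''.ne', kron_congr h2'.ne' hm₂',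
          kron_congr h2''.ne' hm₂'']
      have hS2 := S2_split f₁ f₂ n₁' n₁'' n₂' n₂'' a₁ a₂ a₁' a₂' a₁'' a₂'' hf₁ hf₂
        h1' h1'' h2' h2'' hco hm₁' hm₂' hm₁'' hm₂''
      have hP := prod_split p f₁ f₂ n₁' n₁'' n₂' n₂'' a₁ a₂ a₁' a₂' a₁'' a₂''
        hf₁0 hf₂0 h1' h1'' h2' h2'' hco hm₁' hm₂' hm₁'' hm₂''
      rw [hk₁, hk₂, hS2, hP]
      ring
    · rw [if_neg (fun hc => hC'' (hcond.mp hc).2), if_neg hC'']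
      simp
  · rw [if_neg (fun hc => hC' (hcond.mp hc).1), if_neg hC']
    simp

lemma odd_sq_mod_eight {f : ℕ} (hf : Odd f) : f ^ 2 % 8 = 1 := by
  obtain ⟨k, rfl⟩ := hf
  have h : (2 * k + 1) ^ 2 = 4 * (k * (k + 1)) + 1 := by ring
  obtain ⟨m, hm⟩ := Nat.even_mul_succ_self k
  rw [h, hm]
  omega

lemma Cpf_one (p f₁ f₂ : ℕ) (hf₁ : Odd f₁) (hf₂ : Odd f₂) (hf₁0 : 0 < f₁) (hf₂0 : 0 < f₂) :
    Cpf p f₁ f₂ 1 1 = 1 := by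
  rw [Cpf_eq]
  rw [Finset.sum_range_one, Finset.sum_range_one]
  have hmc : (1 * f₁ ^ 2) % (Nat.gcd (4 * 1 * f₁ ^ 2) (4 * 1 * f₂ ^ 2)) =
      (1 * f₂ ^ 2) % (Nat.gcd (4 * 1 * f₁ ^ 2) (4 * 1 * f₂ ^ 2)) := by
    have e : Nat.gcd (4 * 1 * f₁ ^ 2) (4 * 1 * f₂ ^ 2) = 4 * Nat.gcd (f₁ ^ 2) (f₂ ^ 2) := by
      rw [show 4 * 1 * f₁ ^ 2 = 4 * f₁ ^ 2 from by ring,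
        show 4 * 1 * f₂ ^ 2 = 4 * f₂ ^ 2 from by ring, Nat.gcd_mul_left]
    have h4 : f₁ ^ 2 ≡ f₂ ^ 2 [MOD 4] := by
      have e1 := odd_sq_mod_eight hf₁
      have e2 := odd_sq_mod_eight hf₂
      unfold Nat.ModEq
      omega
    have hG : f₁ ^ 2 ≡ f₂ ^ 2 [MOD Nat.gcd (f₁ ^ 2) (f₂ ^ 2)] :=
      (Nat.modEq_zero_iff_dvd.mpr (Nat.gcd_dvd_left _ _)).trans
        (Nat.modEq_zero_iff_dvd.mpr (Nat.gcd_dvd_right _ _)).symm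
    have hodd : ¬ 2 ∣ Nat.gcd (f₁ ^ 2) (f₂ ^ 2) := by
      intro h2
      have : 2 ∣ f₁ ^ 2 := h2.trans (Nat.gcd_dvd_left _ _)
      have := odd_sq_mod_eight hf₁
      omega
    have hco4 : Nat.Coprime 4 (Nat.gcd (f₁ ^ 2) (f₂ ^ 2)) := by
      have h2 : Nat.Coprime 2 (Nat.gcd (f₁ ^ 2) (f₂ ^ 2)) :=
        (Nat.Prime.coprime_iff_not_dvd Nat.prime_two).mpr hodd
      have : Nat.Coprime (2 ^ 2) (Nat.gcd (f₁ ^ 2) (f₂ ^ 2)) := h2.pow_left 2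
      simpa using this
    have := (Nat.modEq_and_modEq_iff_modEq_mul hco4).mp ⟨h4, hG⟩
    rw [e]
    simpa [one_mul, Nat.ModEq] using this
  have hcond : Nat.Coprime (1 + 4 * 0) (4 * 1) ∧ Nat.Coprime (1 + 4 * 0) (4 * 1) ∧
      (1 + 4 * 0) % 4 = 1 ∧ (1 + 4 * 0) % 4 = 1 ∧
      ((1 + 4 * 0) * f₁ ^ 2) % (Nat.gcd (4 * 1 * f₁ ^ 2) (4 * 1 * f₂ ^ 2)) =
        ((1 + 4 * 0) * f₂ ^ 2) % (Nat.gcd (4 * 1 * f₁ ^ 2) (4 * 1 * f₂ ^ 2)) := by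
    refine ⟨by norm_num, by norm_num, by norm_num, by norm_num, ?_⟩
    simpa using hmc
  unfold Tterm
  rw [if_pos hcond]
  have hsel' : sel f₁ f₂ 1 1 (1 + 4 * 0) (1 + 4 * 0) 2 = (1 + 4 * 0, f₁, 1) :=
    if_pos (by rw [v2_4nf 1 f₁ one_ne_zero hf₁, v2_4nf 1 f₂ one_ne_zero hf₂])
  rw [hsel']
  simp [kron, Nat.factorization_one, S2fun, Nat.primeFactors_one]

theorem Cpf_multiplicative (p : ℕ) (hp : p.Prime) (hp2 : p ≠ 2)
    (f₁ f₂ : ℕ) (hf₁ : Odd f₁) (hf₂ : Odd f₂) (hf₁0 : 0 < f₁) (hf₂0 : 0 < f₂) :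
    Cpf p f₁ f₂ 1 1 = 1 ∧
    ∀ n₁' n₁'' n₂' n₂'' : ℕ, 0 < n₁' → 0 < n₁'' → 0 < n₂' → 0 < n₂'' →
      Nat.Coprime (n₁' * n₂') (n₁'' * n₂'') →
      Cpf p f₁ f₂ (n₁' * n₁'') (n₂' * n₂'') =
        Cpf p f₁ f₂ n₁' n₂' * Cpf p f₁ f₂ n₁'' n₂'' := by
  constructor
  · exact Cpf_one p f₁ f₂ hf₁ hf₂ hf₁0 hf₂0
  intro n₁' n₁'' n₂' n₂'' h1' h1'' h2' h2'' hco
  have hco1 : Nat.Coprime n₁' n₁'' :=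
    Nat.Coprime.coprime_dvd_right (dvd_mul_right _ _)
      (Nat.Coprime.coprime_dvd_left (dvd_mul_right _ _) hco)
  have hco2 : Nat.Coprime n₂' n₂'' :=
    Nat.Coprime.coprime_dvd_right (dvd_mul_left _ _)
      (Nat.Coprime.coprime_dvd_left (dvd_mul_left _ _) hco)
  rw [Cpf_eq, Cpf_eq, Cpf_eq]
  calc
    ∑ b₁ ∈ Finset.range (n₁' * n₁''), ∑ b₂ ∈ Finset.range (n₂' * n₂''),
        Tterm p f₁ f₂ (n₁' * n₁'') (n₂' * n₂'') (1 + 4 * b₁) (1 + 4 * b₂)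
      = ∑ b₁ ∈ Finset.range (n₁' * n₁''), ∑ b₂ ∈ Finset.range (n₂' * n₂''),
          (Tterm p f₁ f₂ n₁' n₂' (1 + 4 * (b₁ % n₁')) (1 + 4 * (b₂ % n₂')) *
           Tterm p f₁ f₂ n₁'' n₂'' (1 + 4 * (b₁ % n₁'')) (1 + 4 * (b₂ % n₂''))) :=
      Finset.sum_congr rfl (fun b₁ _ => Finset.sum_congr rfl (fun b₂ _ =>
        T_split p f₁ f₂ hf₁ hf₂ hf₁0 hf₂0 n₁' n₁'' n₂' n₂'' h1' h1'' h2' h2'' hco b₁ b₂))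
    _ = ∑ x ∈ Finset.range n₁', ∑ y ∈ Finset.range n₁'',
          ∑ b₂ ∈ Finset.range (n₂' * n₂''),
          (Tterm p f₁ f₂ n₁' n₂' (1 + 4 * x) (1 + 4 * (b₂ % n₂')) *
           Tterm p f₁ f₂ n₁'' n₂'' (1 + 4 * y) (1 + 4 * (b₂ % n₂''))) :=
      my_crt_sum hco1 h1' h1'' (fun x y =>
        ∑ b₂ ∈ Finset.range (n₂' * n₂''),
          Tterm p f₁ f₂ n₁' n₂' (1 + 4 * x) (1 + 4 * (b₂ % n₂')) *
          Tterm p f₁ f₂ n₁'' n₂'' (1 + 4 * y) (1 + 4 * (b₂ % n₂'')))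
    _ = ∑ x ∈ Finset.range n₁', ∑ y ∈ Finset.range n₁'',
          ∑ u ∈ Finset.range n₂', ∑ v ∈ Finset.range n₂'',
          (Tterm p f₁ f₂ n₁' n₂' (1 + 4 * x) (1 + 4 * u) *
           Tterm p f₁ f₂ n₁'' n₂'' (1 + 4 * y) (1 + 4 * v)) :=
      Finset.sum_congr rfl (fun x _ => Finset.sum_congr rfl (fun y _ =>
        my_crt_sum hco2 h2' h2'' (fun u v =>
          Tterm p f₁ f₂ n₁' n₂' (1 + 4 * x) (1 + 4 * u) *
          Tterm p f₁ f₂ n₁'' n₂'' (1 + 4 * y) (1 + 4 * v))))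
    _ = (∑ x ∈ Finset.range n₁', ∑ u ∈ Finset.range n₂',
          Tterm p f₁ f₂ n₁' n₂' (1 + 4 * x) (1 + 4 * u)) *
        (∑ y ∈ Finset.range n₁'', ∑ v ∈ Finset.range n₂'',
          Tterm p f₁ f₂ n₁'' n₂'' (1 + 4 * y) (1 + 4 * v)) := by
      rw [Finset.sum_mul_sum]
      exact Finset.sum_congr rfl (fun x _ => Finset.sum_congr rfl (fun y _ =>
        (Finset.sum_mul_sum _ _ _ _).symm))

end
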